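/- Let U and V be real random variables and suppose V has a density bounded above by a constant C > 0. If d_{W₂}(U, V) < 4C, then d_K(U, V) ≤ 5·(C/2)^{2/3}·d_{W₂}(U, V)^{1/3}. -/

import Mathlib

open MeasureTheory Set

section Aux
open MeasureTheory Set intervalIntegral

noncomputable def mstep (a ε t : ℝ) : ℝ := max 0 (min 1 (min (t - a) (a + ε - t)))
noncomputable def hstep (a ε x : ℝ) : ℝ := ∫ t in x..(a + ε), mstep a ε t

lemma mstep_nonneg (a ε t : ℝ) : 0 ≤ mstep a ε t := le_max_left _ _
lemma mstep_le_one (a ε t : ℝ) : mstep a ε t ≤ 1 := max_le (by norm_num) (min_le_left _ _)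

lemma mstep_continuous (a ε : ℝ) : Continuous (mstep a ε) :=
  continuous_const.max (continuous_const.min ((continuous_id.sub continuous_const).min
    (continuous_const.sub continuous_id)))

lemma mstep_lipschitz (a ε : ℝ) : LipschitzWith 1 (mstep a ε) := by
  apply LipschitzWith.of_dist_le_mul
  intro x y
  simp only [Real.dist_eq, NNReal.coe_one, one_mul, mstep]
  have h3 : |min (x-a) (a+ε-x) - min (y-a) (a+ε-y)| ≤ |x - y| := by
    refine (abs_min_sub_min_le_max _ _ _ _).trans (max_le ?_ ?_)
    · have : x - a - (y - a) = x - y := by ring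
      rw [this]
    · have : a + ε - x - (a + ε - y) = y - x := by ring
      rw [this, abs_sub_comm]
  have h2 : |min 1 (min (x-a) (a+ε-x)) - min 1 (min (y-a) (a+ε-y))| ≤ |x - y| := by
    refine (abs_min_sub_min_le_max _ _ _ _).trans (max_le ?_ h3)
    simp [abs_nonneg]
  refine (abs_max_sub_max_le_max _ _ _ _).trans (max_le ?_ h2)
  simp [abs_nonneg]

lemma mstep_eq_zero_left (a ε t : ℝ) (h : t ≤ a) : mstep a ε t = 0 := by
  have : min 1 (min (t-a) (a+ε-t)) ≤ 0 :=
    le_trans (min_le_right _ _) (le_trans (min_le_left _ _) (by linarith))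
  simp [mstep, max_eq_left this]

lemma mstep_eq_zero_right (a ε t : ℝ) (h : a + ε ≤ t) : mstep a ε t = 0 := by
  have : min 1 (min (t-a) (a+ε-t)) ≤ 0 :=
    le_trans (min_le_right _ _) (le_trans (min_le_right _ _) (by linarith))
  simp [mstep, max_eq_left this]

lemma hstep_hasDerivAt (a ε x : ℝ) : HasDerivAt (hstep a ε) (-(mstep a ε x)) x := by
  have hF : HasDerivAt (fun u => ∫ t in (a+ε)..u, mstep a ε t) (mstep a ε x) x :=
    intervalIntegral.integral_hasDerivAt_right
      ((mstep_continuous a ε).intervalIntegrable _ _)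
      ((mstep_continuous a ε).stronglyMeasurableAtFilter _ _)
      (mstep_continuous a ε).continuousAt
  have he : hstep a ε = fun u => -∫ t in (a+ε)..u, mstep a ε t := by
    funext u; rw [hstep, intervalIntegral.integral_symm]
  rw [he]; exact hF.neg

lemma hstep_differentiable (a ε : ℝ) : Differentiable ℝ (hstep a ε) :=
  fun x => (hstep_hasDerivAt a ε x).differentiableAt

lemma hstep_deriv (a ε : ℝ) : deriv (hstep a ε) = fun x => -(mstep a ε x) := by
  funext x; exact (hstep_hasDerivAt a ε x).deriv

lemma hstep_lipschitz (a ε : ℝ) : LipschitzWith 1 (hstep a ε) := by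
  refine lipschitzWith_of_nnnorm_deriv_le (hstep_differentiable a ε) (fun x => ?_)
  rw [hstep_deriv]
  rw [← NNReal.coe_le_coe, coe_nnnorm, Real.norm_eq_abs, abs_neg,
    abs_of_nonneg (mstep_nonneg a ε x)]
  exact mstep_le_one a ε x

lemma hstep_deriv_lipschitz (a ε : ℝ) : LipschitzWith 1 (deriv (hstep a ε)) := by
  rw [hstep_deriv]
  exact (mstep_lipschitz a ε).neg

lemma hstep_sub (a ε x y : ℝ) : hstep a ε x - hstep a ε y = ∫ t in x..y, mstep a ε t := by
  rw [hstep, hstep]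
  rw [← intervalIntegral.integral_add_adjacent_intervals
    ((mstep_continuous a ε).intervalIntegrable x y)
    ((mstep_continuous a ε).intervalIntegrable y (a+ε))]
  ring

lemma hstep_antitone (a ε : ℝ) : Antitone (hstep a ε) := by
  intro x y hxy
  have h := hstep_sub a ε x y
  have : 0 ≤ ∫ t in x..y, mstep a ε t :=
    intervalIntegral.integral_nonneg hxy (fun t _ => mstep_nonneg a ε t)
  linarith

lemma hstep_eq_of_le (a ε x : ℝ) (hx : x ≤ a) : hstep a ε x = hstep a ε a := by
  have h := hstep_sub a ε x a
  have hz : ∫ t in x..a, mstep a ε t = 0 := by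
    rw [intervalIntegral.integral_congr (g := fun _ => 0)
      (fun t ht => by
        rw [uIcc_of_le hx] at ht
        exact mstep_eq_zero_left a ε t ht.2)]
    simp
  linarith [h, hz]

lemma hstep_eq_zero (a ε x : ℝ) (hx : a + ε ≤ x) : hstep a ε x = 0 := by
  rw [hstep, intervalIntegral.integral_symm,
    intervalIntegral.integral_congr (g := fun _ => 0)
      (fun t ht => by
        rw [uIcc_of_le hx] at ht
        exact mstep_eq_zero_right a ε t ht.1)]
  simp

lemma hstep_nonneg (a ε x : ℝ) : 0 ≤ hstep a ε x := by
  rcases le_total (a + ε) x with h | h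
  · rw [hstep_eq_zero a ε x h]
  · rw [← hstep_eq_zero a ε (a+ε) le_rfl]
    exact hstep_antitone a ε h

lemma hstep_le (a ε x : ℝ) : hstep a ε x ≤ hstep a ε a := by
  rcases le_total x a with h | h
  · rw [hstep_eq_of_le a ε x h]
  · exact hstep_antitone a ε h

lemma int_sub_const (p q c : ℝ) : ∫ x in p..q, (x - c) = (q^2 - p^2)/2 - c*(q-p) := by
  rw [intervalIntegral.integral_sub intervalIntegrable_id (intervalIntegrable_const)]
  simp [integral_id, intervalIntegral.integral_const]
  ring

lemma int_const_sub (p q c : ℝ) : ∫ x in p..q, (c - x) = c*(q-p) - (q^2 - p^2)/2 := by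
  rw [intervalIntegral.integral_sub intervalIntegrable_const intervalIntegrable_id]
  simp [integral_id, intervalIntegral.integral_const]
  ring

lemma drop_small (a ε : ℝ) (hε : 0 ≤ ε) (hε2 : ε ≤ 2) : hstep a ε a = ε^2/4 := by
  rw [hstep, ← intervalIntegral.integral_add_adjacent_intervals
    ((mstep_continuous a ε).intervalIntegrable a (a+ε/2))
    ((mstep_continuous a ε).intervalIntegrable (a+ε/2) (a+ε))]
  have e1 : ∫ t in a..(a+ε/2), mstep a ε t = ∫ t in a..(a+ε/2), (t - a) := by
    refine intervalIntegral.integral_congr (fun t ht => ?_)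
    rw [uIcc_of_le (by linarith)] at ht
    obtain ⟨h1, h2⟩ := ht
    have m1 : min (t-a) (a+ε-t) = t-a := min_eq_left (by linarith)
    have m2 : min 1 (t-a) = t-a := min_eq_right (by linarith)
    have m3 : max 0 (t-a) = t-a := max_eq_right (by linarith)
    rw [mstep, m1, m2, m3]
  have e2 : ∫ t in (a+ε/2)..(a+ε), mstep a ε t = ∫ t in (a+ε/2)..(a+ε), (a+ε-t) := by
    refine intervalIntegral.integral_congr (fun t ht => ?_)
    rw [uIcc_of_le (by linarith)] at ht
    obtain ⟨h1, h2⟩ := ht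
    have m1 : min (t-a) (a+ε-t) = a+ε-t := min_eq_right (by linarith)
    have m2 : min 1 (a+ε-t) = a+ε-t := min_eq_right (by linarith)
    have m3 : max 0 (a+ε-t) = a+ε-t := max_eq_right (by linarith)
    rw [mstep, m1, m2, m3]
  rw [e1, e2, int_sub_const, int_const_sub]
  ring

lemma drop_big (a ε : ℝ) (hε2 : 2 ≤ ε) : hstep a ε a = ε - 1 := by
  rw [hstep, ← intervalIntegral.integral_add_adjacent_intervals
    ((mstep_continuous a ε).intervalIntegrable a (a+1))
    ((mstep_continuous a ε).intervalIntegrable (a+1) (a+ε)),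
    ← intervalIntegral.integral_add_adjacent_intervals
    ((mstep_continuous a ε).intervalIntegrable (a+1) (a+ε-1))
    ((mstep_continuous a ε).intervalIntegrable (a+ε-1) (a+ε))]
  have e1 : ∫ t in a..(a+1), mstep a ε t = ∫ t in a..(a+1), (t - a) := by
    refine intervalIntegral.integral_congr (fun t ht => ?_)
    rw [uIcc_of_le (by linarith)] at ht
    obtain ⟨h1, h2⟩ := ht
    have m1 : min (t-a) (a+ε-t) = t-a := min_eq_left (by linarith)
    have m2 : min 1 (t-a) = t-a := min_eq_right (by linarith)
    have m3 : max 0 (t-a) = t-a := max_eq_right (by linarith)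
    rw [mstep, m1, m2, m3]
  have e2 : ∫ t in (a+1)..(a+ε-1), mstep a ε t = ∫ t in (a+1)..(a+ε-1), (1:ℝ) := by
    refine intervalIntegral.integral_congr (fun t ht => ?_)
    rw [uIcc_of_le (by linarith)] at ht
    obtain ⟨h1, h2⟩ := ht
    have m1 : min 1 (min (t-a) (a+ε-t)) = 1 :=
      min_eq_left (le_min (by linarith) (by linarith))
    have m3 : max (0:ℝ) 1 = 1 := by norm_num
    rw [mstep, m1, m3]
  have e3 : ∫ t in (a+ε-1)..(a+ε), mstep a ε t = ∫ t in (a+ε-1)..(a+ε), (a+ε-t) := by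
    refine intervalIntegral.integral_congr (fun t ht => ?_)
    rw [uIcc_of_le (by linarith)] at ht
    obtain ⟨h1, h2⟩ := ht
    have m1 : min (t-a) (a+ε-t) = a+ε-t := min_eq_right (by linarith)
    have m2 : min 1 (a+ε-t) = a+ε-t := min_eq_right (by linarith)
    have m3 : max 0 (a+ε-t) = a+ε-t := max_eq_right (by linarith)
    rw [mstep, m1, m2, m3]
  rw [e1, e2, e3, int_sub_const, int_const_sub, intervalIntegral.integral_const]
  simp
  ring

lemma hstep_integrable (a ε : ℝ) (μ : Measure ℝ) [IsProbabilityMeasure μ] :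
    Integrable (hstep a ε) μ :=
  Integrable.mono' (integrable_const (hstep a ε a))
    (hstep_differentiable a ε).continuous.aestronglyMeasurable
    (ae_of_all _ fun x => by
      rw [Real.norm_eq_abs, abs_of_nonneg (hstep_nonneg a ε x)]
      exact hstep_le a ε x)

lemma integral_hstep_ge (μ : Measure ℝ) [IsProbabilityMeasure μ] (a ε : ℝ) :
    hstep a ε a * (μ (Iic a)).toReal ≤ ∫ x, hstep a ε x ∂μ := by
  have e : ∫ x, (Iic a).indicator (fun _ => hstep a ε a) x ∂μ
      = (μ (Iic a)).toReal • hstep a ε a :=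
    integral_indicator_const _ measurableSet_Iic
  have mono : ∫ x, (Iic a).indicator (fun _ => hstep a ε a) x ∂μ ≤ ∫ x, hstep a ε x ∂μ := by
    refine integral_mono ((integrable_const (hstep a ε a)).indicator measurableSet_Iic)
      (hstep_integrable a ε μ) (fun x => ?_)
    by_cases hx : x ∈ Iic a
    · rw [indicator_of_mem hx, hstep_eq_of_le a ε x hx]
    · rw [indicator_of_notMem hx]
      exact hstep_nonneg a ε x
  rw [smul_eq_mul] at e
  linarith [mono, e.symm.le, e.le, mul_comm (hstep a ε a) ((μ (Iic a)).toReal)]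

lemma integral_hstep_le (μ : Measure ℝ) [IsProbabilityMeasure μ] (a ε : ℝ) (hε : 0 ≤ ε) :
    ∫ x, hstep a ε x ∂μ ≤ hstep a ε a * (μ (Iic (a+ε))).toReal := by
  have e : ∫ x, (Iic (a+ε)).indicator (fun _ => hstep a ε a) x ∂μ
      = (μ (Iic (a+ε))).toReal • hstep a ε a :=
    integral_indicator_const _ measurableSet_Iic
  have mono : ∫ x, hstep a ε x ∂μ
      ≤ ∫ x, (Iic (a+ε)).indicator (fun _ => hstep a ε a) x ∂μ := by
    refine integral_mono (hstep_integrable a ε μ)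
      ((integrable_const (hstep a ε a)).indicator measurableSet_Iic) (fun x => ?_)
    by_cases hx : x ∈ Iic (a+ε)
    · rw [indicator_of_mem hx]
      exact hstep_le a ε x
    · rw [indicator_of_notMem hx, hstep_eq_zero a ε x (le_of_not_ge hx)]
  rw [smul_eq_mul] at e
  linarith [mono, e.le, mul_comm (hstep a ε a) ((μ (Iic (a+ε))).toReal)]

lemma dens_est (muV : Measure ℝ) [IsProbabilityMeasure muV]
    (C : ℝ) (hC : 0 < C) (f : ℝ → ℝ)
    (hf_bound : ∀ x, f x ≤ C)
    (hdens : muV = volume.withDensity fun x => ENNReal.ofReal (f x))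
    (p q : ℝ) (hpq : p ≤ q) :
    (muV (Iic q)).toReal ≤ (muV (Iic p)).toReal + C * (q - p) := by
  have hsplit : Iic q = Iic p ∪ Ioc p q := (Iic_union_Ioc_eq_Iic hpq).symm
  have hdisj : Disjoint (Iic p) (Ioc p q) := Iic_disjoint_Ioc le_rfl
  have hb : muV (Ioc p q) ≤ ENNReal.ofReal (C * (q - p)) := by
    rw [hdens, withDensity_apply _ measurableSet_Ioc]
    calc ∫⁻ x in Ioc p q, ENNReal.ofReal (f x) ∂volume
        ≤ ∫⁻ _x in Ioc p q, ENNReal.ofReal C ∂volume :=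
          lintegral_mono fun x => ENNReal.ofReal_le_ofReal (hf_bound x)
      _ = ENNReal.ofReal C * volume (Ioc p q) := setLIntegral_const _ _
      _ = ENNReal.ofReal C * ENNReal.ofReal (q - p) := by rw [Real.volume_Ioc]
      _ = ENNReal.ofReal (C * (q - p)) := (ENNReal.ofReal_mul hC.le).symm
  have hadd : muV (Iic q) = muV (Iic p) + muV (Ioc p q) := by
    rw [hsplit, measure_union hdisj measurableSet_Ioc]
  have htr : (muV (Ioc p q)).toReal ≤ C * (q - p) :=
    ENNReal.toReal_le_of_le_ofReal (mul_nonneg hC.le (by linarith)) hb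
  rw [hadd, ENNReal.toReal_add (measure_ne_top _ _) (measure_ne_top _ _)]
  linarith

lemma core_est (muU muV : Measure ℝ) [IsProbabilityMeasure muU] [IsProbabilityMeasure muV]
    (C : ℝ) (hC : 0 < C) (f : ℝ → ℝ)
    (hf_bound : ∀ x, f x ≤ C)
    (hdens : muV = volume.withDensity fun x => ENNReal.ofReal (f x))
    (dW2 : ℝ)
    (hdW2 : ∀ h : ℝ → ℝ, Differentiable ℝ h → LipschitzWith 1 h →
      LipschitzWith 1 (deriv h) → Integrable h muU → Integrable h muV →
      |(∫ x, h x ∂muU) - (∫ x, h x ∂muV)| ≤ dW2)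
    (a ε D : ℝ) (hε : 0 < ε) (hD : 0 < D) (hdrop : ∀ b : ℝ, hstep b ε b = D) :
    |(muU (Set.Iic a)).toReal - (muV (Set.Iic a)).toReal| ≤ C * ε + dW2 / D := by
  have W : ∀ b : ℝ, |(∫ x, hstep b ε x ∂muU) - (∫ x, hstep b ε x ∂muV)| ≤ dW2 := fun b =>
    hdW2 _ (hstep_differentiable b ε) (hstep_lipschitz b ε) (hstep_deriv_lipschitz b ε)
      (hstep_integrable b ε muU) (hstep_integrable b ε muV)
  set PU := (muU (Set.Iic a)).toReal with hPU
  set PV := (muV (Set.Iic a)).toReal with hPV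
  have habs : dW2 / D * D = dW2 := div_mul_cancel₀ _ hD.ne'
  rw [abs_sub_le_iff]
  constructor
  · -- upper bound : PU - PV ≤ C ε + dW2/D
    have U1 : D * PU ≤ ∫ x, hstep a ε x ∂muU := by
      have := integral_hstep_ge muU a ε
      rwa [hdrop a] at this
    have U2 : ∫ x, hstep a ε x ∂muV ≤ D * (muV (Iic (a+ε))).toReal := by
      have := integral_hstep_le muV a ε hε.le
      rwa [hdrop a] at this
    have U3 : (muV (Iic (a+ε))).toReal ≤ PV + C * ε := by
      have h := dens_est muV C hC f hf_bound hdens a (a+ε) (by linarith)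
      have he : C * (a + ε - a) = C * ε := by ring
      rw [he] at h
      exact h
    have U4 : (∫ x, hstep a ε x ∂muU) - (∫ x, hstep a ε x ∂muV) ≤ dW2 :=
      (abs_le.1 (W a)).2
    have U5 : D * (muV (Iic (a+ε))).toReal ≤ D * (PV + C * ε) :=
      mul_le_mul_of_nonneg_left U3 hD.le
    have key : D * PU ≤ D * PV + D * (C * ε) + dW2 := by nlinarith
    have : (PU - PV) * D ≤ (C * ε + dW2 / D) * D := by
      have hexp : (C * ε + dW2 / D) * D = D * (C * ε) + dW2 := by
        rw [add_mul, habs]; ring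
      rw [hexp]; nlinarith
    exact le_of_mul_le_mul_right this hD
  · -- lower bound : PV - PU ≤ C ε + dW2/D
    have b := a - ε
    have L1 : PV ≤ (muV (Iic (a-ε))).toReal + C * ε := by
      have h := dens_est muV C hC f hf_bound hdens (a-ε) a (by linarith)
      have he : C * (a - (a - ε)) = C * ε := by ring
      rw [he] at h
      exact h
    have L2 : D * (muV (Iic (a-ε))).toReal ≤ ∫ x, hstep (a-ε) ε x ∂muV := by
      have := integral_hstep_ge muV (a-ε) ε
      rwa [hdrop (a-ε)] at this
    have L3 : ∫ x, hstep (a-ε) ε x ∂muU ≤ D * PU := by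
      have := integral_hstep_le muU (a-ε) ε hε.le
      rw [hdrop (a-ε)] at this
      have he : a - ε + ε = a := by ring
      rwa [he] at this
    have L4 : (∫ x, hstep (a-ε) ε x ∂muV) - (∫ x, hstep (a-ε) ε x ∂muU) ≤ dW2 := by
      have := (abs_le.1 (W (a-ε))).1
      linarith
    have key : D * PV ≤ D * PU + D * (C * ε) + dW2 := by
      have L5 : D * PV ≤ D * ((muV (Iic (a-ε))).toReal + C * ε) :=
        mul_le_mul_of_nonneg_left L1 hD.le
      nlinarith
    have : (PV - PU) * D ≤ (C * ε + dW2 / D) * D := by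
      have hexp : (C * ε + dW2 / D) * D = D * (C * ε) + dW2 := by
        rw [add_mul, habs]; ring
      rw [hexp]; nlinarith
    exact le_of_mul_le_mul_right this hD

end Aux

/-- If `V` has a density bounded by `C` and the `W₂` distance between `U` and
`V` is less than `4C`, then the Kolmogorov distance is at most
`5·(C/2)^(2/3)·d_{W₂}(U,V)^(1/3)`. -/
theorem kolmogorov_from_W2
    (muU muV : Measure ℝ) [IsProbabilityMeasure muU] [IsProbabilityMeasure muV]
    (C : ℝ) (hC : 0 < C)
    (f : ℝ → ℝ) (hf_meas : Measurable f)
    (hf_nonneg : ∀ x, 0 ≤ f x) (hf_bound : ∀ x, f x ≤ C)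
    (hdens : muV = volume.withDensity fun x => ENNReal.ofReal (f x))
    (dW2 : ℝ)
    (hdW2 : ∀ h : ℝ → ℝ, Differentiable ℝ h → LipschitzWith 1 h →
      LipschitzWith 1 (deriv h) → Integrable h muU → Integrable h muV →
      |(∫ x, h x ∂muU) - (∫ x, h x ∂muV)| ≤ dW2)
    (hlt : dW2 < 4 * C) :
    ∀ a : ℝ, |(muU (Set.Iic a)).toReal - (muV (Set.Iic a)).toReal|
      ≤ 5 * (C / 2) ^ ((2 : ℝ) / 3) * dW2 ^ ((1 : ℝ) / 3) := by

  have hd0 : 0 ≤ dW2 := by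
    have h0 := hdW2 (fun _ => 0) (differentiable_const 0)
      (by simpa using LipschitzWith.const' (0:ℝ) (K := 1))
      (by
        have : deriv (fun _ : ℝ => (0:ℝ)) = fun _ => 0 := by
          funext x; simp
        rw [this]
        simpa using LipschitzWith.const' (0:ℝ) (K := 1))
      (integrable_const 0) (integrable_const 0)
    simpa using h0
  intro a
  set PU := (muU (Set.Iic a)).toReal
  set PV := (muV (Set.Iic a)).toReal
  have core : ∀ ε D : ℝ, 0 < ε → 0 < D → (∀ b : ℝ, hstep b ε b = D) →
      |PU - PV| ≤ C * ε + dW2 / D := fun ε D h1 h2 h3 =>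
    core_est muU muV C hC f hf_bound hdens dW2 hdW2 a ε D h1 h2 h3
  rcases eq_or_lt_of_le hd0 with h0 | hpos
  · -- dW2 = 0
    have hz : ∀ ε : ℝ, 0 < ε → ε ≤ 2 → |PU - PV| ≤ C * ε := by
      intro ε h1 h2
      have hD : (0:ℝ) < ε^2/4 := by positivity
      have := core ε (ε^2/4) h1 hD (fun b => drop_small b ε h1.le h2)
      rw [← h0] at this
      simpa using this
    have habs0 : |PU - PV| ≤ 0 := by
      by_contra hcon
      push_neg at hcon
      set ε := min (|PU - PV| / (2*C)) 2 with hε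
      have hε0 : 0 < ε := lt_min (by positivity) (by norm_num)
      have hε2 : ε ≤ 2 := min_le_right _ _
      have h1 := hz ε hε0 hε2
      have h2 : C * ε ≤ C * (|PU - PV| / (2*C)) :=
        mul_le_mul_of_nonneg_left (min_le_left _ _) hC.le
      have h3 : C * (|PU - PV| / (2*C)) = |PU - PV| / 2 := by
        field_simp
      nlinarith
    have hrhs : 5 * (C / 2) ^ ((2 : ℝ) / 3) * dW2 ^ ((1 : ℝ) / 3) = 0 := by
      rw [← h0, Real.zero_rpow (by norm_num)]
      ring
    rw [hrhs]
    exact habs0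
  · -- 0 < dW2
    have hRnn : 0 ≤ 5 * (C / 2) ^ ((2 : ℝ) / 3) * dW2 ^ ((1 : ℝ) / 3) := by positivity
    have hcube : (5 * (C / 2) ^ ((2 : ℝ) / 3) * dW2 ^ ((1 : ℝ) / 3))^3
        = 125 * (C/2)^2 * dW2 := by
      have h1 : ((C / 2) ^ ((2 : ℝ) / 3))^3 = (C/2)^2 := by
        rw [← Real.rpow_natCast ((C / 2) ^ ((2 : ℝ) / 3)) 3, ← Real.rpow_mul (by positivity)]
        norm_num
      have h2 : (dW2 ^ ((1 : ℝ) / 3))^3 = dW2 := by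
        rw [← Real.rpow_natCast (dW2 ^ ((1 : ℝ) / 3)) 3, ← Real.rpow_mul hd0]
        norm_num
      calc (5 * (C / 2) ^ ((2 : ℝ) / 3) * dW2 ^ ((1 : ℝ) / 3))^3
          = 125 * ((C / 2) ^ ((2 : ℝ) / 3))^3 * (dW2 ^ ((1 : ℝ) / 3))^3 := by ring
        _ = 125 * (C/2)^2 * dW2 := by rw [h1, h2]
    rcases le_or_gt dW2 C with hsmall | hbig
    · -- dW2 ≤ C : use ε = 2 t with t = (dW2/C)^(1/3)
      set t := (dW2/C) ^ ((1:ℝ)/3) with htdef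
      have hdc : 0 < dW2 / C := div_pos hpos hC
      have ht0 : 0 < t := Real.rpow_pos_of_pos hdc _
      have ht3 : t^3 = dW2 / C := by
        rw [htdef, ← Real.rpow_natCast ((dW2/C) ^ ((1:ℝ)/3)) 3, ← Real.rpow_mul hdc.le]
        norm_num
      have ht1 : t ≤ 1 :=
        Real.rpow_le_one hdc.le (by rw [div_le_one hC]; exact hsmall) (by norm_num)
      have hε0 : (0:ℝ) < 2*t := by linarith
      have hε2 : 2*t ≤ 2 := by linarith
      have hD : (0:ℝ) < (2*t)^2/4 := by positivity
      have hb := core (2*t) ((2*t)^2/4) hε0 hD (fun b => drop_small b (2*t) hε0.le hε2)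
      have hdw : dW2 = C * t^3 := by rw [ht3]; field_simp
      have hBeq : C * (2*t) + dW2 / ((2*t)^2/4) = 3*(C*t) := by
        rw [hdw]; field_simp; ring
      rw [hBeq] at hb
      refine hb.trans ?_
      have h30 : (0:ℝ) ≤ 3*(C*t) := by positivity
      rw [← pow_le_pow_iff_left₀ h30 hRnn (three_ne_zero), hcube]
      have : (3*(C*t))^3 = 27 * C^2 * (C*t^3) := by ring
      rw [this, ht3]
      have : C * (dW2/C) = dW2 := by field_simp
      rw [this]
      nlinarith [sq_nonneg C, mul_nonneg (sq_nonneg C) hd0]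
    · -- C < dW2 : use ε = 1 + u with u = sqrt (dW2/C)
      set u := Real.sqrt (dW2/C) with hudef
      have hdc : 0 < dW2 / C := div_pos hpos hC
      have hu0 : 0 < u := Real.sqrt_pos.2 hdc
      have hu2 : u^2 = dW2/C := Real.sq_sqrt hdc.le
      have hgt : 1 < dW2 / C := (one_lt_div hC).2 hbig
      have hu1 : 1 ≤ u := by nlinarith [hu2, hu0, hgt]
      have hult : u < 2 := by
        have : dW2 / C < 4 := by rw [div_lt_iff₀ hC]; linarith
        nlinarith
      have hε2 : (2:ℝ) ≤ 1 + u := by linarith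
      have hε0 : (0:ℝ) < 1 + u := by linarith
      have hDpos : (0:ℝ) < 1 + u - 1 := by linarith
      have hb := core (1+u) (1+u-1) hε0 hDpos (fun b => drop_big b (1+u) hε2)
      have hdw : dW2 = C * u^2 := by rw [hu2]; field_simp
      have hBeq : C * (1+u) + dW2 / (1+u-1) = C*(1+2*u) := by
        rw [hdw]
        have : (1:ℝ)+u-1 = u := by ring
        rw [this]
        field_simp
        ring
      rw [hBeq] at hb
      refine hb.trans ?_
      have h30 : (0:ℝ) ≤ C*(1+2*u) := by positivity
      rw [← pow_le_pow_iff_left₀ h30 hRnn (three_ne_zero), hcube]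
      have hexp : (C*(1+2*u))^3 = C^3 * (1+2*u)^3 := by ring
      have hrhs : 125 * (C/2)^2 * dW2 = (125/4) * C^3 * u^2 := by
        rw [hdw]; ring
      rw [hexp, hrhs]
      have hfac : 0 ≤ (2 - u) * (32*u^2 - 13*u - 2) :=
        mul_nonneg (by linarith) (by nlinarith)
      have hpoly : (1+2*u)^3 ≤ 125/4 * u^2 := by nlinarith [hfac]
      calc C^3 * (1+2*u)^3 ≤ C^3 * (125/4 * u^2) :=
            mul_le_mul_of_nonneg_left hpoly (pow_pos hC 3).le
        _ = 125/4 * C^3 * u^2 := by ring
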